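/- Swap step preserves one-sided price-EF1 in the two-types algorithm: with partition (S, T) of M, round-robin bundles (X_1,...,X_{n₁}) for S and (Y_1,...,Y_{n₂}) for T with respect to nonnegative prices p, suppose j_1 ∈ S and j_2 ∈ T are swapped to form (S', T') = (S\{j_1}∪{j_2}, T\{j_2}∪{j_1}) with resulting round-robin bundles (X'_i) and (Y'_i). If p(Y_{n₂}) < p̂(X_1), then p(X'_{n₁}) ≥ p̂(Y'_1). -/

import Mathlib

open Finset

lemma getD_nonneg {A : List ℝ} (hnn : ∀ x ∈ A, 0 ≤ x) (i : ℕ) : 0 ≤ A.getD i 0 := by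
  rcases lt_or_ge i A.length with h | h
  · rw [List.getD_eq_get _ _ ⟨i, h⟩]; exact hnn _ (A.get_mem _)
  · rw [List.getD_eq_default _ _ h]

lemma getD_anti {A : List ℝ} (hA : A.Pairwise (· ≥ ·)) (hnn : ∀ x ∈ A, 0 ≤ x)
    {i j : ℕ} (hij : i ≤ j) : A.getD j 0 ≤ A.getD i 0 := by
  rcases lt_or_ge j A.length with hj | hj
  · have hi : i < A.length := lt_of_le_of_lt hij hj
    rw [List.getD_eq_get _ _ ⟨i, hi⟩, List.getD_eq_get _ _ ⟨j, hj⟩]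
    rcases eq_or_lt_of_le hij with rfl | h
    · exact le_refl _
    · exact hA.rel_get_of_lt h
  · rw [List.getD_eq_default _ _ hj]; exact getD_nonneg hnn i

lemma sub2 : ∀ {A E : List ℝ}, List.Sublist E A → A.Pairwise (· ≥ ·) →
    (∀ x ∈ A, 0 ≤ x) → ∀ i, E.getD i 0 ≤ A.getD i 0 := by
  intro A E h
  induction h with
  | slnil => intro _ _ i; simp
  | @cons E₁ A₁ a h ih =>
    intro hA hnn i
    have hA₁ : A₁.Pairwise (· ≥ ·) := hA.of_cons
    have hnn₁ : ∀ x ∈ A₁, 0 ≤ x := fun x hx => hnn x (List.mem_cons_of_mem _ hx)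
    refine (ih hA₁ hnn₁ i).trans ?_
    cases i with
    | zero =>
      rw [List.getD_cons_zero]
      cases A₁ with
      | nil => simpa using hnn a (by simp)
      | cons b A₂ =>
        rw [List.getD_cons_zero]
        exact List.rel_of_pairwise_cons hA (a' := b) (by simp)
    | succ i =>
      rw [List.getD_cons_succ]
      exact getD_anti hA₁ hnn₁ (Nat.le_succ i)
  | @cons_cons E₁ A₁ a h ih =>
    intro hA hnn i
    cases i with
    | zero => simp
    | succ i =>
      rw [List.getD_cons_succ, List.getD_cons_succ]
      exact ih hA.of_cons (fun x hx => hnn x (List.mem_cons_of_mem _ hx)) i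

lemma sub1 : ∀ {A E : List ℝ}, List.Sublist E A → A.Pairwise (· ≥ ·) →
    A.length = E.length + 1 → ∀ i, A.getD (i + 1) 0 ≤ E.getD i 0 := by
  intro A E h
  induction h with
  | slnil => intro _ hlen; simp at hlen
  | @cons E₁ A₁ a h ih =>
    intro hA hlen i
    have hl : A₁.length = E₁.length := by simpa using hlen
    rw [h.eq_of_length hl.symm]
    rw [List.getD_cons_succ]
  | @cons_cons E₁ A₁ a h ih =>
    intro hA hlen i
    have hlen₁ : A₁.length = E₁.length + 1 := by simpa using hlen
    cases i with
    | zero =>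
      rw [List.getD_cons_succ, List.getD_cons_zero]
      cases A₁ with
      | nil => simp at hlen₁
      | cons b A₂ =>
        rw [List.getD_cons_zero]
        exact List.rel_of_pairwise_cons hA (a' := b) (by simp)
    | succ i =>
      rw [List.getD_cons_succ, List.getD_cons_succ]
      exact ih hA.of_cons hlen₁ i

lemma swap_setup {L L' : List ℝ} (hL : L.Pairwise (· ≥ ·)) (hL' : L'.Pairwise (· ≥ ·))
    {x y : ℝ} (hy : y ∈ L) (h : (L' : Multiset ℝ) = x ::ₘ (L : Multiset ℝ).erase y) :
    ∃ E : List ℝ, E.Sublist L ∧ E.Sublist L' ∧ L.length = E.length + 1 ∧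
      L'.length = E.length + 1 := by
  obtain ⟨s, t, rfl⟩ := List.append_of_mem hy
  have hco : ((s ++ y :: t : List ℝ) : Multiset ℝ) = y ::ₘ ((s ++ t : List ℝ) : Multiset ℝ) :=
    Multiset.coe_eq_coe.mpr List.perm_middle
  rw [hco, Multiset.erase_cons_head] at h
  have hperm : List.Perm L' (x :: (s ++ t)) := Multiset.coe_eq_coe.mp (by simpa using h)
  refine ⟨s ++ t, (List.sublist_cons_self y t).append_left s, ?_, by simp [Nat.add_assoc], ?_⟩
  · have hsp : List.Subperm (s ++ t) L' :=
      ((List.sublist_cons_self x (s ++ t)).subperm).trans hperm.symm.subperm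
    exact List.sublist_of_subperm_of_pairwise hsp
      (hL.sublist ((List.sublist_cons_self y t).append_left s)) hL'
  · simpa using hperm.length_eq

/-- Swap step preserves one-sided price-EF1: with price multisets `S` (size
`k·n₁`, for type-1 agents) and `T` (size `k·n₂`, for type-2 agents), swap
`j₁ ∈ S` with `j₂ ∈ T` to get `S'`, `T'`. With round-robin by nonincreasing
price (sorted lists `LS, LT, LS', LT'`), if `p(Y_{n₂}) < p̂(X_1)` then
`p(X'_{n₁}) ≥ p̂(Y'_1)`. -/
theorem stmt15 (k n₁ n₂ : ℕ) (hn₁ : 0 < n₁) (hn₂ : 0 < n₂)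
    (S T : Multiset ℝ)
    (hScard : Multiset.card S = k * n₁) (hTcard : Multiset.card T = k * n₂)
    (hSnn : ∀ x ∈ S, (0:ℝ) ≤ x) (hTnn : ∀ x ∈ T, (0:ℝ) ≤ x)
    (j₁ j₂ : ℝ) (hj₁ : j₁ ∈ S) (hj₂ : j₂ ∈ T)
    (LS LT LS' LT' : List ℝ)
    (hLSsort : LS.Pairwise (· ≥ ·)) (hLS : (LS : Multiset ℝ) = S)
    (hLTsort : LT.Pairwise (· ≥ ·)) (hLT : (LT : Multiset ℝ) = T)
    (hLS'sort : LS'.Pairwise (· ≥ ·)) (hLS' : (LS' : Multiset ℝ) = j₂ ::ₘ S.erase j₁)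
    (hLT'sort : LT'.Pairwise (· ≥ ·)) (hLT' : (LT' : Multiset ℝ) = j₁ ::ₘ T.erase j₂)
    (hlt : ∑ ι ∈ Finset.range k, LT.getD (ι * n₂ + (n₂ - 1)) 0 <
      ∑ ι ∈ Finset.Ico 1 k, LS.getD (ι * n₁ + 0) 0) :
    ∑ ι ∈ Finset.Ico 1 k, LT'.getD (ι * n₂ + 0) 0 ≤
      ∑ ι ∈ Finset.range k, LS'.getD (ι * n₁ + (n₁ - 1)) 0 := by
  have hj₁L : j₁ ∈ LS := by rw [← Multiset.mem_coe, hLS]; exact hj₁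
  have hj₂L : j₂ ∈ LT := by rw [← Multiset.mem_coe, hLT]; exact hj₂
  obtain ⟨E, hES, hES', hlenS, hlenS'⟩ :=
    swap_setup hLSsort hLS'sort hj₁L (by rw [hLS', hLS])
  obtain ⟨F, hFT, hFT', hlenT, hlenT'⟩ :=
    swap_setup hLTsort hLT'sort hj₂L (by rw [hLT', hLT])
  have hnnS' : ∀ x ∈ LS', 0 ≤ x := by
    intro x hx
    have hx' : x ∈ (LS' : Multiset ℝ) := Multiset.mem_coe.mpr hx
    rw [hLS'] at hx'
    rcases Multiset.mem_cons.mp hx' with rfl | hx'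
    · exact hTnn _ hj₂
    · exact hSnn _ (Multiset.mem_of_mem_erase hx')
  have hnnT : ∀ x ∈ LT, 0 ≤ x := fun x hx => hTnn x (by rw [← hLT]; exact Multiset.mem_coe.mpr hx)
  have hS : ∀ i, LS.getD (i + 1) 0 ≤ LS'.getD i 0 := fun i =>
    (sub1 hES hLSsort hlenS i).trans (sub2 hES' hLS'sort hnnS' i)
  have hT : ∀ i, LT'.getD (i + 1) 0 ≤ LT.getD i 0 := fun i =>
    (sub1 hFT' hLT'sort hlenT' i).trans (sub2 hFT hLTsort hnnT i)
  calc ∑ ι ∈ Finset.Ico 1 k, LT'.getD (ι * n₂ + 0) 0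
      = ∑ i ∈ Finset.range (k - 1), LT'.getD ((1 + i) * n₂ + 0) 0 :=
        Finset.sum_Ico_eq_sum_range _ _ _
    _ ≤ ∑ i ∈ Finset.range (k - 1), LT.getD (i * n₂ + (n₂ - 1)) 0 := by
        refine Finset.sum_le_sum fun i _ => ?_
        have h1 : (1 + i) * n₂ + 0 = (i * n₂ + (n₂ - 1)) + 1 := by
          rw [add_zero, add_mul, one_mul, add_assoc, Nat.sub_add_cancel hn₂, Nat.add_comm]
        rw [h1]; exact hT _
    _ ≤ ∑ i ∈ Finset.range k, LT.getD (i * n₂ + (n₂ - 1)) 0 :=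
        Finset.sum_le_sum_of_subset_of_nonneg
          (Finset.range_subset_range.mpr (Nat.sub_le k 1))
          (fun i _ _ => getD_nonneg hnnT _)
    _ ≤ ∑ ι ∈ Finset.Ico 1 k, LS.getD (ι * n₁ + 0) 0 := le_of_lt hlt
    _ = ∑ i ∈ Finset.range (k - 1), LS.getD ((1 + i) * n₁ + 0) 0 :=
        Finset.sum_Ico_eq_sum_range _ _ _
    _ ≤ ∑ i ∈ Finset.range (k - 1), LS'.getD (i * n₁ + (n₁ - 1)) 0 := by
        refine Finset.sum_le_sum fun i _ => ?_
        have h1 : (1 + i) * n₁ + 0 = (i * n₁ + (n₁ - 1)) + 1 := by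
          rw [add_zero, add_mul, one_mul, add_assoc, Nat.sub_add_cancel hn₁, Nat.add_comm]
        rw [h1]; exact hS _
    _ ≤ ∑ i ∈ Finset.range k, LS'.getD (i * n₁ + (n₁ - 1)) 0 :=
        Finset.sum_le_sum_of_subset_of_nonneg
          (Finset.range_subset_range.mpr (Nat.sub_le k 1))
          (fun i _ _ => getD_nonneg hnnS' _)
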